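/- Let a < b be real numbers with b − a ≥ 1 and |γ₀(a) − γ₀(b)| ≤ 10ε. Then b − a ≥ 50. (Equivalently: any sub-segment of the curve of length at least 1 whose two endpoints are at extrinsic distance at most 10ε has length at least 50.) -/

import Mathlib

open MeasureTheory Set

noncomputable section

abbrev E3 := EuclideanSpace ℝ (Fin 3)

/-- **Corollary 2.3.** Under the stated hypotheses on `γ₀`, any sub-segment `γ₀([a,b])` of
length `b − a ≥ 1` whose endpoints satisfy `|γ₀(a) − γ₀(b)| ≤ 10ε` has length `b − a ≥ 50`. -/
theorem stmt_4 (ε L : ℝ) (γ₀ T : ℝ → E3)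
    (hε : 0 < ε) (hε' : ε < 1 / 10000)
    (hL : 1 ≤ L)
    (hper : Function.Periodic γ₀ L)
    (hderiv : ∀ s, HasDerivAt γ₀ (T s) s)
    (hunit : ∀ s, ‖T s‖ = 1)
    (hclose : ∀ s t : ℝ, |s - t| ≤ 1 → ‖T s - T t‖ ≤ ε)
    (a b : ℝ) (hab : a < b) (hlen : 1 ≤ b - a)
    (hends : ‖γ₀ a - γ₀ b‖ ≤ 10 * ε) :
    50 ≤ b - a := by
  by_contra hcon
  push_neg at hcon
  -- chaining lemma
  have key : ∀ n : ℕ, ∀ s t : ℝ, |s - t| ≤ n → ‖T s - T t‖ ≤ n * ε := by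
    intro n
    induction n with
    | zero =>
      intro s t h
      simp only [Nat.cast_zero, zero_mul] at *
      have : s = t := by
        have := abs_nonneg (s - t)
        have : s - t = 0 := by
          have := abs_eq_zero.mp (le_antisymm h (abs_nonneg _))
          linarith [this]
        linarith
      simp [this]
    | succ n ih =>
      intro s t h
      by_cases h1 : |s - t| ≤ 1
      · have := hclose s t h1
        have hn : (0:ℝ) ≤ n := Nat.cast_nonneg n
        push_cast
        nlinarith
      · push_neg at h1
        push_cast at h ⊢
        rcases le_total t s with hts | hts
        · rw [abs_of_nonneg (by linarith)] at h h1
          have hu : ‖T s - T (s - 1)‖ ≤ ε := hclose s (s - 1) (by rw [abs_of_nonneg] <;> linarith)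
          have hv : ‖T (s - 1) - T t‖ ≤ n * ε := ih (s - 1) t (by rw [abs_of_nonneg] <;> [skip; linarith]; linarith)
          calc ‖T s - T t‖ ≤ ‖T s - T (s-1)‖ + ‖T (s-1) - T t‖ := norm_sub_le_norm_sub_add_norm_sub _ _ _
            _ ≤ (n + 1) * ε := by linarith
        · rw [abs_of_nonpos (by linarith), neg_sub] at h h1
          have hu : ‖T s - T (s + 1)‖ ≤ ε := hclose s (s + 1) (by rw [abs_of_nonpos] <;> [simp; linarith])
          have hv : ‖T (s + 1) - T t‖ ≤ n * ε := ih (s + 1) t (by rw [abs_of_nonpos (by linarith)]; push_cast; linarith)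
          calc ‖T s - T t‖ ≤ ‖T s - T (s+1)‖ + ‖T (s+1) - T t‖ := norm_sub_le_norm_sub_add_norm_sub _ _ _
            _ ≤ (n + 1) * ε := by linarith
  have hstep : ∀ s ∈ Set.Icc a b, ‖T s - T a‖ ≤ 50 * ε := by
    intro s hs
    have := key 50 s a (by rw [abs_of_nonneg (by linarith [hs.1])]; push_cast; linarith [hs.2])
    push_cast at this; linarith
  -- inner product lower bound
  have hinner : ∀ s ∈ Set.Icc a b, (1 - 1250 * ε ^ 2 : ℝ) ≤ inner ℝ (T a) (T s) := by
    intro s hs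
    have h1 : ‖T s - T a‖ ≤ 50 * ε := hstep s hs
    have h2 : ‖T s - T a‖ ^ 2 = ‖T s‖ ^ 2 - 2 * inner ℝ (T s) (T a) + ‖T a‖ ^ 2 :=
      norm_sub_sq_real _ _
    rw [hunit, hunit] at h2
    rw [real_inner_comm]
    nlinarith [norm_nonneg (T s - T a)]
  -- T measurable and integrable
  have hT : T = deriv γ₀ := funext fun s => ((hderiv s).deriv).symm
  have hTmeas : Measurable T := hT ▸ measurable_deriv γ₀
  have hTint : IntervalIntegrable T volume a b := by
    refine (intervalIntegrable_const (c := (1:ℝ))).mono_fun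
      hTmeas.aestronglyMeasurable.restrict ?_
    filter_upwards with x
    simp [hunit]
  have hftc : ∫ s in a..b, T s = γ₀ b - γ₀ a :=
    intervalIntegral.integral_eq_sub_of_hasDerivAt (fun x _ => hderiv x) hTint
  have hinteq : (inner ℝ (T a) (γ₀ b - γ₀ a) : ℝ) = ∫ s in a..b, (inner ℝ (T a) (T s) : ℝ) := by
    rw [← hftc, intervalIntegral.integral_of_le hab.le, intervalIntegral.integral_of_le hab.le,
      integral_inner hTint.1]
  have hgint : IntervalIntegrable (fun s => (inner ℝ (T a) (T s) : ℝ)) volume a b := by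
    refine (intervalIntegrable_const (c := (1:ℝ))).mono_fun
      ((Continuous.measurable (continuous_const.inner continuous_id)).comp hTmeas).aestronglyMeasurable.restrict ?_
    filter_upwards with x
    have := abs_real_inner_le_norm (T a) (T x)
    simp only [Real.norm_eq_abs, norm_one]
    rw [hunit, hunit] at this
    simpa using this
  have hmono : ((b - a) * (1 - 1250 * ε ^ 2) : ℝ) ≤ ∫ s in a..b, (inner ℝ (T a) (T s) : ℝ) := by
    have := intervalIntegral.integral_mono_on (μ := volume) hab.le
      (intervalIntegrable_const (c := (1 - 1250 * ε ^ 2 : ℝ))) hgint hinner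
    rwa [intervalIntegral.integral_const, smul_eq_mul] at this
  have hub : (inner ℝ (T a) (γ₀ b - γ₀ a) : ℝ) ≤ 10 * ε := by
    have h1 := real_inner_le_norm (T a) (γ₀ b - γ₀ a)
    rw [hunit, one_mul] at h1
    rw [← norm_neg, neg_sub] at h1
    linarith
  nlinarith [hmono, hub, hinteq]
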